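/- For every q ∈ (0, 1], s(q) = δ_r(1, q, q), i.e., Florian's bound equals the density of a packing of one disk of radius 1 and two disks of radius q, mutually tangent, inside the triangle formed by their centers. -/

import Mathlib

open Real

/-- Florian's bound. -/
noncomputable def florianS (q : ℝ) : ℝ :=
  (π * q ^ 2 + 2 * (1 - q ^ 2) * arcsin (q / (1 + q))) / (2 * q * Real.sqrt (1 + 2 * q))

/-- Inradius of the triangle of centers of three mutually externally tangent circles. -/
noncomputable def inradiusR (r₁ r₂ r₃ : ℝ) : ℝ := Real.sqrt (r₁ * r₂ * r₃ / (r₁ + r₂ + r₃))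

/-- Area of that triangle (Heron's formula). -/
noncomputable def triAreaR (r₁ r₂ r₃ : ℝ) : ℝ := Real.sqrt (r₁ * r₂ * r₃ * (r₁ + r₂ + r₃))

/-- Density of the three circles inside the triangle of their centers. -/
noncomputable def deltaR (r₁ r₂ r₃ : ℝ) : ℝ :=
  ((π / 2 - arctan (r₁ / inradiusR r₁ r₂ r₃)) * r₁ ^ 2 +
      (π / 2 - arctan (r₂ / inradiusR r₁ r₂ r₃)) * r₂ ^ 2 +
      (π / 2 - arctan (r₃ / inradiusR r₁ r₂ r₃)) * r₃ ^ 2) / triAreaR r₁ r₂ r₃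

theorem florian_eq_deltaR (q : ℝ) (hq : q ∈ Set.Ioc (0 : ℝ) 1) :
    florianS q = deltaR 1 q q := by
  obtain ⟨hq0, hq1⟩ := hq
  set s : ℝ := Real.sqrt (1 + 2 * q) with hs_def
  have hs_pos : 0 < s := Real.sqrt_pos.mpr (by linarith)
  have hs2 : s ^ 2 = 1 + 2 * q := Real.sq_sqrt (by linarith)
  have hq1p : 0 < 1 + q := by linarith
  -- inradius
  have hR : inradiusR 1 q q = q / s := by
    rw [inradiusR]
    have : (1 : ℝ) * q * q / (1 + q + q) = q ^ 2 / (1 + 2 * q) := by ring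
    rw [this, Real.sqrt_div (sq_nonneg q), Real.sqrt_sq hq0.le]
  -- area
  have hT : triAreaR 1 q q = q * s := by
    rw [triAreaR]
    have : (1 : ℝ) * q * q * (1 + q + q) = q ^ 2 * (1 + 2 * q) := by ring
    rw [this, Real.sqrt_mul (sq_nonneg q), Real.sqrt_sq hq0.le]
  -- arcsin to arctan
  have harcsin : arcsin (q / (1 + q)) = arctan (q / s) := by
    have hmem : q / (1 + q) ∈ Set.Ioo (-(1:ℝ)) 1 := by
      constructor
      · have : 0 < q / (1 + q) := by positivity
        linarith
      · rw [div_lt_one hq1p]; linarith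
    rw [Real.arcsin_eq_arctan hmem]
    congr 1
    have h1 : 1 - (q / (1 + q)) ^ 2 = (1 + 2 * q) / (1 + q) ^ 2 := by
      field_simp; ring
    rw [h1, Real.sqrt_div' _ (by positivity), Real.sqrt_sq hq1p.le]
    field_simp
    rw [hs_def, mul_comm q 2]
  -- key arctan identity
  have key : arctan (q / s) + 2 * arctan s⁻¹ = π / 2 := by
    have hmul : (q / s) * s⁻¹ < 1 := by
      rw [show q / s * s⁻¹ = q / s ^ 2 by ring, hs2, div_lt_one (by linarith)]
      linarith
    have hadd := Real.arctan_add hmul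
    have harg : (q / s + s⁻¹) / (1 - q / s * s⁻¹) = s := by
      have hne : s ≠ 0 := hs_pos.ne'
      have hnum : q / s + s⁻¹ = (q + 1) / s := by ring
      have hden : 1 - q / s * s⁻¹ = (1 + q) / (1 + 2 * q) := by
        rw [show q / s * s⁻¹ = q / s ^ 2 by ring, hs2]
        field_simp
        ring
      rw [hnum, hden]
      rw [div_div_div_eq]
      rw [div_eq_iff (by positivity)]
      linear_combination (-(1 + q)) * hs2
    rw [harg] at hadd
    have hinv := Real.arctan_inv_of_pos hs_pos
    linarith
  -- assemble
  rw [florianS, deltaR, hR, hT, harcsin]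
  have e1 : (1 : ℝ) / (q / s) = s / q := one_div_div q s
  have e2 : q / (q / s) = s := by field_simp
  rw [e1, e2]
  have e3 : π / 2 - arctan (s / q) = arctan (q / s) := by
    have h := Real.arctan_inv_of_pos (div_pos hs_pos hq0)
    rw [← h, inv_div]
  have e4 : π / 2 - arctan s = arctan s⁻¹ := by
    linarith [Real.arctan_inv_of_pos hs_pos]
  rw [e3, e4]
  rw [div_eq_div_iff (by positivity) (by positivity)]
  linear_combination (-2 * q ^ 3 * s) * key
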